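/- For every δ ∈ (0, 1/2): (1/(δ(1−2δ)√π)) ∫₀^∞ e^{−t} t^{−δ} dt ≠ ∫₀^∞ e^{−t} t^{−1/2−δ} dt; equivalently, Γ(1−δ) ≠ δ(1−2δ)√π · Γ(1/2−δ). (Consequently, no solution q of the linear integro-differential equation ∂_t q(t) = Z M(t) ∫₀^t q(s) ds − Z ∫₀^t M(t−s) q(s) ds with q(0) = 1 can have the asymptotic form q(t) = C t^{−1/2−δ} + O(t^{−1/2−δ−ε}) with C ≠ 0 for any δ ∈ (0,1/2) and ε > 0.) -/

import Mathlib

open MeasureTheory Real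

/-- Log-convexity consequence: `Γ(1+x)^2 ≤ Γ(1+2x)` for `x ≥ 0`. -/
lemma aux_sq_le (x : ℝ) (hx : 0 ≤ x) :
    Real.Gamma (1 + x) ^ 2 ≤ Real.Gamma (1 + 2 * x) := by
  have h1 : (1 : ℝ) ∈ Set.Ioi (0:ℝ) := by norm_num
  have h2 : (1 + 2 * x : ℝ) ∈ Set.Ioi (0:ℝ) := by simp; linarith
  have hc := Real.convexOn_log_Gamma.2 h1 h2 (by norm_num : (0:ℝ) ≤ 1/2)
    (by norm_num : (0:ℝ) ≤ 1/2) (by norm_num)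
  have hmid : (1/2 : ℝ) • (1:ℝ) + (1/2 : ℝ) • (1 + 2 * x) = 1 + x := by
    simp only [smul_eq_mul]; ring
  rw [hmid] at hc
  simp only [Function.comp_apply, Real.Gamma_one, Real.log_one, smul_eq_mul,
    mul_zero, zero_add] at hc
  have hpos1 : 0 < Real.Gamma (1 + x) := Real.Gamma_pos_of_pos (by linarith)
  have hpos2 : 0 < Real.Gamma (1 + 2 * x) := Real.Gamma_pos_of_pos (by linarith)
  have hmono := Real.exp_le_exp.mpr (by linarith : 2 * Real.log (Real.Gamma (1 + x)) ≤
    Real.log (Real.Gamma (1 + 2 * x)))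
  have e : Real.exp (2 * Real.log (Real.Gamma (1 + x))) = Real.Gamma (1 + x) ^ 2 := by
    rw [two_mul, Real.exp_add, Real.exp_log hpos1]; ring
  rwa [e, Real.exp_log hpos2] at hmono

/-- Key inequality: for `0 < x < 1/2`, `Γ(x+1/2) > √π (1-2x) Γ(x+1)`. -/
lemma aux_key (x : ℝ) (hx0 : 0 < x) (hx1 : x < 1/2) :
    Real.sqrt π * (1 - 2 * x) * Real.Gamma (x + 1) < Real.Gamma (x + 1/2) := by
  have hπ : 0 < Real.sqrt π := Real.sqrt_pos.mpr Real.pi_pos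
  have hΓx1 : 0 < Real.Gamma (x + 1) := Real.Gamma_pos_of_pos (by linarith)
  have hΓx2 : 0 < Real.Gamma (x + 1/2) := Real.Gamma_pos_of_pos (by linarith)
  have hΓ2x1 : 0 < Real.Gamma (2 * x + 1) := Real.Gamma_pos_of_pos (by linarith)
  -- duplication formula
  have hdup := Real.Gamma_mul_Gamma_add_half x
  have hgx : x * Real.Gamma x = Real.Gamma (x + 1) := by
    rw [Real.Gamma_add_one (ne_of_gt hx0)]
  have hg2x : (2 * x) * Real.Gamma (2 * x) = Real.Gamma (2 * x + 1) := by
    rw [Real.Gamma_add_one (by positivity)]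
  have h2 : ((2:ℝ) ^ ((1:ℝ) - 2 * x)) = 2 * (2:ℝ) ^ (-(2*x)) := by
    rw [show (1:ℝ) - 2*x = 1 + (-(2*x)) by ring, Real.rpow_add two_pos, Real.rpow_one]
  rw [h2] at hdup
  -- so Γ(x+1/2) * Γ(x+1) = 2^(-2x) * √π * Γ(2x+1)
  have hprod : Real.Gamma (x + 1/2) * Real.Gamma (x + 1)
      = (2:ℝ) ^ (-(2 * x)) * Real.sqrt π * Real.Gamma (2 * x + 1) := by
    rw [← hgx, ← hg2x]
    linear_combination x * hdup
  -- (1 - 2x) < 2^(-2x)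
  have hexp : (1 : ℝ) - 2 * x < (2:ℝ) ^ (-(2 * x)) := by
    have hlog2 : Real.log 2 < 1 := by
      have := Real.log_two_lt_d9; linarith
    have hlog2' : 0 < Real.log 2 := Real.log_pos (by norm_num)
    have h1 : (1:ℝ) + (-(2 * x) * Real.log 2) < Real.exp (-(2*x) * Real.log 2) := by
      have := Real.add_one_lt_exp (x := -(2*x) * Real.log 2)
        (by intro h; nlinarith)
      linarith
    have h2' : (2:ℝ) ^ (-(2 * x)) = Real.exp (-(2*x) * Real.log 2) := by
      rw [Real.rpow_def_of_pos two_pos]; ring_nf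
    rw [h2']
    nlinarith
  -- Γ(x+1)^2 ≤ Γ(2x+1)
  have hsq := aux_sq_le x (le_of_lt hx0)
  have hsq' : Real.Gamma (x + 1) ^ 2 ≤ Real.Gamma (2 * x + 1) := by
    rw [show (1:ℝ) + x = x + 1 by ring, show (1:ℝ) + 2*x = 2*x + 1 by ring] at hsq
    exact hsq
  -- combine
  have hmain : Real.sqrt π * (1 - 2*x) * Real.Gamma (x + 1) * Real.Gamma (x + 1)
      < Real.Gamma (x + 1/2) * Real.Gamma (x + 1) := by
    rw [hprod]
    have hint1 := mul_lt_mul_of_pos_left hexp (mul_pos hπ (pow_pos hΓx1 2))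
    have hint2 := mul_le_mul_of_nonneg_left hsq'
      (by positivity : (0:ℝ) ≤ Real.sqrt π * (2:ℝ) ^ (-(2*x)))
    nlinarith [hint1, hint2]
  exact lt_of_mul_lt_mul_right hmain (le_of_lt hΓx1)

theorem stmt19 (δ : ℝ) (hδ0 : 0 < δ) (hδ1 : δ < 1/2) :
    ((1 / (δ * (1 - 2*δ) * Real.sqrt π)) * ∫ t in Set.Ioi (0:ℝ), Real.exp (-t) * t ^ (-δ))
        ≠ ∫ t in Set.Ioi (0:ℝ), Real.exp (-t) * t ^ (-(1:ℝ)/2 - δ)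
    ∧ Real.Gamma (1 - δ) ≠ δ * (1 - 2*δ) * Real.sqrt π * Real.Gamma (1/2 - δ) := by
  have hπ : 0 < Real.sqrt π := Real.sqrt_pos.mpr Real.pi_pos
  have hΓhalf : 0 < Real.Gamma (1/2 - δ) := Real.Gamma_pos_of_pos (by linarith)
  have hkey := aux_key (1/2 - δ) (by linarith) (by linarith)
  have hx12 : (1/2 - δ) + 1/2 = 1 - δ := by ring
  have hΓadd : Real.Gamma ((1/2 - δ) + 1) = (1/2 - δ) * Real.Gamma (1/2 - δ) :=
    Real.Gamma_add_one (by intro h; rw [sub_eq_zero] at h; linarith [h.symm])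
  rw [hx12, hΓadd] at hkey
  have hmain : δ * (1 - 2*δ) * Real.sqrt π * Real.Gamma (1/2 - δ) < Real.Gamma (1 - δ) := by
    nlinarith [hkey, hΓhalf, hπ]
  have hne : Real.Gamma (1 - δ) ≠ δ * (1 - 2*δ) * Real.sqrt π * Real.Gamma (1/2 - δ) :=
    ne_of_gt hmain
  have hc : 0 < δ * (1 - 2*δ) * Real.sqrt π :=
    mul_pos (mul_pos hδ0 (by linarith)) hπ
  constructor
  · have hI1 : (∫ t in Set.Ioi (0:ℝ), Real.exp (-t) * t ^ (-δ)) = Real.Gamma (1 - δ) := by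
      rw [Real.Gamma_eq_integral (by linarith : (0:ℝ) < 1 - δ)]
      norm_num
    have hI2 : (∫ t in Set.Ioi (0:ℝ), Real.exp (-t) * t ^ (-(1:ℝ)/2 - δ))
        = Real.Gamma (1/2 - δ) := by
      rw [Real.Gamma_eq_integral (by linarith : (0:ℝ) < 1/2 - δ),
        show (1:ℝ)/2 - δ - 1 = -(1:ℝ)/2 - δ from by ring]
    rw [hI1, hI2]
    intro h
    apply hne
    have : δ * (1 - 2*δ) * Real.sqrt π * Real.Gamma (1/2 - δ) = Real.Gamma (1 - δ) := by
      rw [← h]; field_simp; exact mul_div_cancel_left₀ _ (by intro h0; linarith)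
    exact this.symm
  · exact hne
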